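/- Fix M ≥ 1 groups indexed cyclically modulo M, a distinguished group g, and for each group m a finite index set of flows. Let the following real parameters be given: loads ρ_{m,k} ≥ 0 for each flow {m,k}; mean headways b_{m,k} > 0 and mean residual headways br_{m,k} ≥ 0; deterministic all-red times R_m ≥ 0 with R := Σ_m R_m > 0; a flow {g,j} in group g and a real κ ≥ 0. Write ρ = Σ_{m,k} ρ_{m,k} and ρ_{m,•} = Σ_k ρ_{m,k}. For i = 0,…,M−1 write group g+i for the group whose green period occurs i steps after group g's (indices mod M, g+0 = g). Then the following algebraic identity holds: ρ_{g,j}·(κ·br_{g,j} + b_{g,j}) + Σ_{i=1}^{M−1} Σ_k ρ_{g+i,k}·( br_{g+i,k} + Σ_{l=i}^{M−1} R_{g+l} + b_{g,j} ) + Σ_{i=0}^{M−1} (R_{g+i}/R)·[ (R_{g+i}/2)·(1 − ρ + 2·Σ_{l=i+1}^{M−1} ρ_{g+l,•} + ρ_{g,j}) + (Σ_{k'=0}^{i−1} R_{g+k'})·(Σ_{l=i+1}^{M−1} ρ_{g+l,•} + ρ_{g,j}) + (Σ_{k'=i+1}^{M−1} R_{g+k'})·(1 − ρ + Σ_{l=i+1}^{M−1}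 ρ_{g+l,•}) + (1 − ρ)·b_{g,j} ] = ρ_{g,j}·(κ − 1)·br_{g,j} + Σ_{m,k} ρ_{m,k}·br_{m,k} + b_{g,j} − Σ_{k ≠ j} ρ_{g,k}·(br_{g,k} + b_{g,j}) + (1/2)·(1 + ρ + ρ_{g,j} − 2ρ_{g,•})·R. (This is the claim that the light-traffic expression (19) for E[W^LT_{g,j}], in the case of deterministic all-red times where E[R_m^res] = R_m/2, reduces to the compact closed form (13), using that ρ·E[B^res] = Σ_{m,k} ρ_{m,k}·br_{m,k}.) -/

import Mathlib

open Finset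
open Fin.NatCast

private lemma swap_sum (n : ℕ) (f h : ℕ → ℝ) :
    ∑ i ∈ range n, f i * ∑ l ∈ Ico (i+1) n, h l
      = ∑ l ∈ range n, h l * ∑ i ∈ range l, f i := by
  induction n with
  | zero => simp
  | succ n ih =>
    rw [Finset.sum_range_succ, Finset.sum_range_succ]
    have h1 : ∀ i ∈ range n, f i * ∑ l ∈ Ico (i+1) (n+1), h l
        = f i * ∑ l ∈ Ico (i+1) n, h l + f i * h n := by
      intro i hi
      rw [Finset.sum_Ico_succ_top (Nat.succ_le_of_lt (mem_range.mp hi)), mul_add]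
    rw [Finset.sum_congr rfl h1, Finset.sum_add_distrib, ih, Ico_self]
    simp [← Finset.sum_mul, mul_comm]

private lemma sum_range_split {M : ℕ} (hM : 0 < M) (f : ℕ → ℝ) :
    ∑ i ∈ range M, f i = f 0 + ∑ i ∈ Ico 1 M, f i := by
  rw [Finset.range_eq_Ico, Finset.sum_eq_sum_Ico_succ_bot hM]

private lemma abstract_LT (M : ℕ) (hM : 0 < M) (r a F : ℕ → ℝ) (P B brj κ : ℝ)
    (hSR : (∑ i ∈ range M, r i) ≠ 0) :
    P * (κ * brj + B)
      + (∑ i ∈ Ico 1 M, (F i + a i * ((∑ l ∈ Ico i M, r l) + B)))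
      + (∑ i ∈ range M, r i / (∑ m ∈ range M, r m) *
          ( r i / 2 * (1 - (∑ m ∈ range M, a m) + 2 * (∑ l ∈ Ico (i+1) M, a l) + P)
          + (∑ k' ∈ range i, r k') * ((∑ l ∈ Ico (i+1) M, a l) + P)
          + (∑ k' ∈ Ico (i+1) M, r k') * (1 - (∑ m ∈ range M, a m) + ∑ l ∈ Ico (i+1) M, a l)
          + (1 - (∑ m ∈ range M, a m)) * B))
    = P * κ * brj + (∑ i ∈ Ico 1 M, F i) + (1 + P - a 0) * B
      + (1 + (∑ m ∈ range M, a m) + P - 2 * a 0) / 2 * (∑ m ∈ range M, r m) := by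
  set SR := ∑ i ∈ range M, r i with hSRdef
  set Sa := ∑ i ∈ range M, a i with hSadef
  set Y := ∑ l ∈ range M, a l * ∑ k ∈ range l, r k with hYdef
  set X := ∑ i ∈ range M, r i * ∑ k ∈ range i, r k with hXdef
  set Q := ∑ i ∈ range M, (r i)^2 with hQdef
  have hcomp : ∀ i ∈ range M, (∑ k' ∈ Ico (i+1) M, r k') = SR - (∑ k ∈ range i, r k) - r i := by
    intro i hi
    have h1 : (∑ k ∈ range i, r k) + (r i + ∑ k ∈ Ico (i+1) M, r k) = SR := by
      rw [← Finset.sum_eq_sum_Ico_succ_bot (mem_range.mp hi),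
        Finset.sum_range_add_sum_Ico _ (le_of_lt (mem_range.mp hi))]
    linarith
  have hTi : ∀ i ∈ Ico 1 M, (∑ l ∈ Ico i M, r l) = SR - ∑ k ∈ range i, r k := by
    intro i hi
    have := Finset.sum_range_add_sum_Ico r (le_of_lt (mem_Ico.mp hi).2)
    linarith
  have hswap : ∑ i ∈ range M, r i * ∑ l ∈ Ico (i+1) M, a l = Y := swap_sum M r a
  have hXX : ∑ i ∈ range M, r i * ∑ l ∈ Ico (i+1) M, r l = X := swap_sum M r r
  have h2X : 2 * X = SR^2 - Q := by
    have e : ∀ i ∈ range M, r i * ∑ l ∈ Ico (i+1) M, r l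
        = r i * SR - r i * (∑ k ∈ range i, r k) - (r i)^2 := by
      intro i hi; rw [hcomp i hi]; ring
    rw [Finset.sum_congr rfl e, Finset.sum_sub_distrib, Finset.sum_sub_distrib,
      ← Finset.sum_mul] at hXX
    rw [← hXdef, ← hQdef, ← hSRdef] at hXX
    nlinarith [hXX]
  -- the third big sum
  have hterm3 : (∑ i ∈ range M, r i / SR *
          ( r i / 2 * (1 - Sa + 2 * (∑ l ∈ Ico (i+1) M, a l) + P)
          + (∑ k' ∈ range i, r k') * ((∑ l ∈ Ico (i+1) M, a l) + P)
          + (∑ k' ∈ Ico (i+1) M, r k') * (1 - Sa + ∑ l ∈ Ico (i+1) M, a l)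
          + (1 - Sa) * B))
      = (1 - Sa + P) * SR / 2 + Y + (1 - Sa) * B := by
    have hnum : (∑ i ∈ range M, r i *
          ( r i / 2 * (1 - Sa + 2 * (∑ l ∈ Ico (i+1) M, a l) + P)
          + (∑ k' ∈ range i, r k') * ((∑ l ∈ Ico (i+1) M, a l) + P)
          + (∑ k' ∈ Ico (i+1) M, r k') * (1 - Sa + ∑ l ∈ Ico (i+1) M, a l)
          + (1 - Sa) * B))
        = SR * ((1 - Sa + P) * SR / 2 + Y + (1 - Sa) * B) := by
      have e : ∀ i ∈ range M, r i *
          ( r i / 2 * (1 - Sa + 2 * (∑ l ∈ Ico (i+1) M, a l) + P)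
          + (∑ k' ∈ range i, r k') * ((∑ l ∈ Ico (i+1) M, a l) + P)
          + (∑ k' ∈ Ico (i+1) M, r k') * (1 - Sa + ∑ l ∈ Ico (i+1) M, a l)
          + (1 - Sa) * B)
        = (1 - Sa + P)/2 * (r i)^2 + P * (r i * (∑ k ∈ range i, r k))
          + (1 - Sa) * (r i * SR - r i * (∑ k ∈ range i, r k) - (r i)^2)
          + SR * (r i * (∑ l ∈ Ico (i+1) M, a l)) + (1 - Sa) * B * r i := by
        intro i hi; rw [hcomp i hi]; ring
      rw [Finset.sum_congr rfl e]
      simp only [Finset.sum_add_distrib, ← Finset.mul_sum, Finset.sum_sub_distrib,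
        ← Finset.sum_mul]
      rw [← hXdef, ← hQdef, ← hSRdef, hswap]
      linear_combination ((P - 1 + Sa)/2) * h2X
    have e2 : ∀ i ∈ range M, r i / SR *
          ( r i / 2 * (1 - Sa + 2 * (∑ l ∈ Ico (i+1) M, a l) + P)
          + (∑ k' ∈ range i, r k') * ((∑ l ∈ Ico (i+1) M, a l) + P)
          + (∑ k' ∈ Ico (i+1) M, r k') * (1 - Sa + ∑ l ∈ Ico (i+1) M, a l)
          + (1 - Sa) * B)
        = (r i *
          ( r i / 2 * (1 - Sa + 2 * (∑ l ∈ Ico (i+1) M, a l) + P)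
          + (∑ k' ∈ range i, r k') * ((∑ l ∈ Ico (i+1) M, a l) + P)
          + (∑ k' ∈ Ico (i+1) M, r k') * (1 - Sa + ∑ l ∈ Ico (i+1) M, a l)
          + (1 - Sa) * B)) / SR := by
      intro i _; rw [div_mul_eq_mul_div]
    rw [Finset.sum_congr rfl e2, ← Finset.sum_div, hnum, mul_comm,
      mul_div_assoc, div_self hSR, mul_one]
  -- the second sum
  have hterm2 : ∑ i ∈ Ico 1 M, (F i + a i * ((∑ l ∈ Ico i M, r l) + B))
      = (∑ i ∈ Ico 1 M, F i) + ((Sa - a 0) * SR - Y) + (Sa - a 0) * B := by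
    have e1 : ∀ i ∈ Ico 1 M, F i + a i * ((∑ l ∈ Ico i M, r l) + B)
        = F i + (a i * SR - a i * (∑ k ∈ range i, r k)) + a i * B := by
      intro i hi; rw [hTi i hi]; ring
    rw [Finset.sum_congr rfl e1]
    simp only [Finset.sum_add_distrib, Finset.sum_sub_distrib, ← Finset.sum_mul]
    have hSa1 : ∑ i ∈ Ico 1 M, a i = Sa - a 0 := by
      rw [hSadef, sum_range_split hM a]; ring
    have hY1 : ∑ i ∈ Ico 1 M, a i * (∑ k ∈ range i, r k) = Y := by
      rw [hYdef, sum_range_split hM (fun l => a l * ∑ k ∈ range l, r k)]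
      simp
    rw [hSa1, hY1]
  rw [hterm2, hterm3]
  ring

private lemma reindex_cyc (M : ℕ) [NeZero M] (g : Fin M) (F : Fin M → ℝ) :
    ∑ i ∈ range M, F (g + (i : Fin M)) = ∑ m, F m := by
  rw [← Fin.sum_univ_eq_sum_range (fun i => F (g + (i : Fin M)))]
  simp only [Fin.cast_val_eq_self]
  exact Fintype.sum_equiv (Equiv.addLeft g) _ _ (fun x => rfl)

/-- The light-traffic expression (19) for `E[W^LT_{g,j}]`, with deterministic all-red times
(`E[R_m^res] = R_m/2`), reduces to the compact closed form (13).  Groups are indexed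
cyclically modulo `M` (group `g + i` has its green period `i` steps after group `g`'s),
`ρtot = Σ ρ_{m,k}`, `ρdot m = Σ_k ρ_{m,k}`, `Rtot = Σ_m R_m`, and
`κ = E[Â_{g,j}]·ĝ_{g,j}(0)`. -/
theorem LT_expression_reduces (M : ℕ) [NeZero M] (K : Fin M → ℕ)
    (ρ : (m : Fin M) → Fin (K m) → ℝ) (b : (m : Fin M) → Fin (K m) → ℝ)
    (br : (m : Fin M) → Fin (K m) → ℝ) (R : Fin M → ℝ)
    (g : Fin M) (j : Fin (K g)) (κ : ℝ)
    (hρ : ∀ m k, 0 ≤ ρ m k) (hb : ∀ m k, 0 < b m k) (hbr : ∀ m k, 0 ≤ br m k)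
    (hR : ∀ m, 0 ≤ R m) (hRtot : 0 < ∑ m, R m) (hκ : 0 ≤ κ) :
    let ρtot : ℝ := ∑ m, ∑ k, ρ m k
    let ρdot : Fin M → ℝ := fun m => ∑ k, ρ m k
    let Rtot : ℝ := ∑ m, R m
    ρ g j * (κ * br g j + b g j)
      + (∑ i ∈ Finset.Ico 1 M, ∑ k, ρ (g + (i : Fin M)) k *
          (br (g + (i : Fin M)) k + (∑ l ∈ Finset.Ico i M, R (g + (l : Fin M))) + b g j))
      + (∑ i ∈ Finset.range M, R (g + (i : Fin M)) / Rtot *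
          (R (g + (i : Fin M)) / 2 *
              (1 - ρtot + 2 * (∑ l ∈ Finset.Ico (i + 1) M, ρdot (g + (l : Fin M))) + ρ g j)
            + (∑ k' ∈ Finset.range i, R (g + (k' : Fin M))) *
              ((∑ l ∈ Finset.Ico (i + 1) M, ρdot (g + (l : Fin M))) + ρ g j)
            + (∑ k' ∈ Finset.Ico (i + 1) M, R (g + (k' : Fin M))) *
              (1 - ρtot + ∑ l ∈ Finset.Ico (i + 1) M, ρdot (g + (l : Fin M)))
            + (1 - ρtot) * b g j))
      = ρ g j * (κ - 1) * br g j + (∑ m, ∑ k, ρ m k * br m k) + b g j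
        - (∑ k ∈ Finset.univ.erase j, ρ g k * (br g k + b g j))
        + 1 / 2 * (1 + ρtot + ρ g j - 2 * ρdot g) * Rtot := by
  intro ρtot ρdot Rtot
  have hM : 0 < M := Nat.pos_of_ne_zero (NeZero.ne M)
  have hRr : Rtot = ∑ i ∈ range M, R (g + (i : Fin M)) := (reindex_cyc M g R).symm
  have hρr : ρtot = ∑ i ∈ range M, ρdot (g + (i : Fin M)) := (reindex_cyc M g ρdot).symm
  have hne : (∑ i ∈ range M, R (g + (i : Fin M))) ≠ 0 := by
    rw [reindex_cyc M g R]; exact ne_of_gt hRtot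
  -- rewrite term2 summands
  have hterm2 : ∀ i ∈ Ico 1 M, ∑ k, ρ (g + (i : Fin M)) k *
          (br (g + (i : Fin M)) k + (∑ l ∈ Finset.Ico i M, R (g + (l : Fin M))) + b g j)
      = (∑ k, ρ (g + (i : Fin M)) k * br (g + (i : Fin M)) k)
        + ρdot (g + (i : Fin M)) * ((∑ l ∈ Finset.Ico i M, R (g + (l : Fin M))) + b g j) := by
    intro i _
    have e : ∀ k, ρ (g + (i : Fin M)) k *
          (br (g + (i : Fin M)) k + (∑ l ∈ Finset.Ico i M, R (g + (l : Fin M))) + b g j)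
        = ρ (g + (i : Fin M)) k * br (g + (i : Fin M)) k
          + ρ (g + (i : Fin M)) k * ((∑ l ∈ Finset.Ico i M, R (g + (l : Fin M))) + b g j) := by
      intro k; ring
    rw [Finset.sum_congr rfl (fun k _ => e k), Finset.sum_add_distrib, ← Finset.sum_mul]
  rw [Finset.sum_congr rfl hterm2, hRr, hρr]
  have key := abstract_LT M hM (fun i => R (g + (i : Fin M)))
    (fun i => ρdot (g + (i : Fin M)))
    (fun i => ∑ k, ρ (g + (i : Fin M)) k * br (g + (i : Fin M)) k)
    (ρ g j) (b g j) (br g j) κ hne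

  rw [key]
  beta_reduce
  -- now convert the abstract RHS to the stated RHS
  have h0 : g + ((0 : ℕ) : Fin M) = g := by simp
  have hF : ∑ i ∈ Ico 1 M, ∑ k, ρ (g + (i : Fin M)) k * br (g + (i : Fin M)) k
      = (∑ m, ∑ k, ρ m k * br m k) - (∑ k, ρ g k * br g k) := by
    have := sum_range_split hM (fun i => ∑ k, ρ (g + (i : Fin M)) k * br (g + (i : Fin M)) k)
    beta_reduce at this
    rw [reindex_cyc M g (fun m => ∑ k, ρ m k * br m k), h0] at this
    linarith
  have ha0 : ρdot (g + ((0 : ℕ) : Fin M)) = ρdot g := by rw [h0]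
  have herase : ∑ k ∈ Finset.univ.erase j, ρ g k * (br g k + b g j)
      = (∑ k, ρ g k * br g k) + ρdot g * b g j - ρ g j * (br g j + b g j) := by
    rw [Finset.sum_erase_eq_sub (mem_univ j)]
    have e : ∀ k : Fin (K g), ρ g k * (br g k + b g j)
        = ρ g k * br g k + ρ g k * b g j := fun k => by ring
    rw [Finset.sum_congr rfl (fun k _ => e k), Finset.sum_add_distrib, ← Finset.sum_mul]
  rw [hF, ha0, herase]
  ring
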